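/- The sequence a_n = ∑_{k=0}^{⌊n/2⌋} (1/2^{n-k}) C(n-k,k) converges to 2/3 as n → ∞. -/

import Mathlib

def cseq (n : ℕ) : ℕ := ∑ k ∈ Finset.range (n / 2 + 1), (n - k).choose k * 2 ^ k

lemma cseq_rec (n : ℕ) : cseq (n + 2) = cseq (n + 1) + 2 * cseq n := by
  have h2 : (n + 2) / 2 + 1 = n / 2 + 1 + 1 := by omega
  have hle : n / 2 ≤ n := Nat.div_le_self n 2
  have hB : (∑ k ∈ Finset.range ((n + 1) / 2 + 1), (n + 1 - k).choose k * 2 ^ k)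
      = (∑ i ∈ Finset.range (n / 2 + 1), (n - i).choose (i + 1) * 2 ^ (i + 1)) + 1 := by
    rw [Finset.sum_range_succ']
    simp only [Nat.sub_zero, Nat.choose_zero_right, pow_zero, mul_one]
    congr 1
    have hc : ∀ i ∈ Finset.range ((n+1)/2),
        (n + 1 - (i + 1)).choose (i + 1) * 2 ^ (i + 1)
          = (n - i).choose (i + 1) * 2 ^ (i + 1) := by
      intro i _
      congr 2
      omega
    rw [Finset.sum_congr rfl hc]
    rcases Nat.even_or_odd n with ⟨m, hm⟩ | ⟨m, hm⟩
    · have e1 : (n + 1) / 2 = n / 2 := by omega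
      rw [e1, Finset.sum_range_succ]
      have hz : (n - n / 2).choose (n / 2 + 1) = 0 := by
        apply Nat.choose_eq_zero_of_lt; omega
      rw [hz, zero_mul, add_zero]
    · have e1 : (n + 1) / 2 = n / 2 + 1 := by omega
      rw [e1]
  simp only [cseq, h2]
  rw [Finset.sum_range_succ']
  have hcongr : ∀ i ∈ Finset.range (n / 2 + 1),
      (n + 2 - (i + 1)).choose (i + 1) * 2 ^ (i + 1)
        = (n - i).choose i * 2 ^ i * 2 + (n - i).choose (i + 1) * 2 ^ (i + 1) := by
    intro i hi
    have hi' : i ≤ n / 2 := by simpa [Nat.lt_succ_iff] using hi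
    have h3 : n + 2 - (i + 1) = (n - i) + 1 := by omega
    rw [h3, Nat.choose_succ_succ]
    ring
  rw [Finset.sum_congr rfl hcongr, Finset.sum_add_distrib]
  have hA : ∑ i ∈ Finset.range (n / 2 + 1), (n - i).choose i * 2 ^ i * 2
      = 2 * ∑ k ∈ Finset.range (n / 2 + 1), (n - k).choose k * 2 ^ k := by
    rw [Finset.mul_sum]; apply Finset.sum_congr rfl; intro i _; ring
  simp only [Nat.sub_zero, Nat.choose_zero_right, pow_zero, mul_one]
  omega

lemma cseq_closed (n : ℕ) : 3 * (cseq n : ℤ) = 2 ^ (n + 1) + (-1) ^ n := by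
  induction n using Nat.twoStepInduction with
  | zero => simp [cseq]
  | one => simp [cseq]
  | more n ih1 ih2 =>
    rw [cseq_rec]
    push_cast
    ring_nf
    ring_nf at ih1 ih2
    linarith

theorem short_diagonal_tendsto :
    Filter.Tendsto
      (fun n : ℕ => ∑ k ∈ Finset.range (n / 2 + 1), ((n - k).choose k : ℝ) / 2 ^ (n - k))
      Filter.atTop (nhds (2 / 3)) := by
  have hsum : ∀ n : ℕ, (∑ k ∈ Finset.range (n / 2 + 1), ((n - k).choose k : ℝ) / 2 ^ (n - k))
      = 2 / 3 + (-1 / 2 : ℝ) ^ n / 3 := by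
    intro n
    have hle : n / 2 ≤ n := Nat.div_le_self n 2
    have h1 : (∑ k ∈ Finset.range (n / 2 + 1), ((n - k).choose k : ℝ) / 2 ^ (n - k))
        = (cseq n : ℝ) / 2 ^ n := by
      rw [cseq]
      push_cast
      rw [Finset.sum_div]
      apply Finset.sum_congr rfl
      intro k hk
      have hk' : k ≤ n / 2 := by simpa [Nat.lt_succ_iff] using hk
      have h2 : (2 : ℝ) ^ k * 2 ^ (n - k) = 2 ^ n := by
        rw [← pow_add]; congr 1; omega
      field_simp
      rw [← h2]; ring
    rw [h1]
    have h3 : (cseq n : ℝ) = (2 ^ (n + 1) + (-1) ^ n) / 3 := by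
      have h := cseq_closed n
      have h' : (3 : ℝ) * (cseq n : ℝ) = 2 ^ (n + 1) + (-1) ^ n := by
        exact_mod_cast congrArg (Int.cast : ℤ → ℝ) h
      linarith
    rw [h3]
    have hpow : ((-1 : ℝ) / 2) ^ n = (-1) ^ n / 2 ^ n := div_pow _ _ _
    rw [hpow]
    have h2n : (2 : ℝ) ^ n ≠ 0 := by positivity
    field_simp
    ring
  simp only [hsum]
  have h0 : Filter.Tendsto (fun n : ℕ => ((-1 : ℝ) / 2) ^ n) Filter.atTop (nhds 0) := by
    apply tendsto_pow_atTop_nhds_zero_of_abs_lt_one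
    rw [abs_div]; norm_num
  have h := ((h0.div_const 3).const_add (2 / 3 : ℝ))
  simpa using h
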